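/- Let v be an even-weight codeword of a binary linear code C that is decomposable in C. Then v^(ex) is a zero neighbor in the extended code C_ex if and only if every decomposition v = v1 + v2 into nonzero disjoint-support codewords of C has both v1 and v2 of odd weight. -/

import Mathlib

open Finset

/-- Support of a binary vector: the set of nonzero coordinates. -/
def supp {n : ℕ} (v : Fin n → ZMod 2) : Finset (Fin n) :=
  Finset.univ.filter fun i => v i ≠ 0

/-- Hamming weight. -/
def wt {n : ℕ} (v : Fin n → ZMod 2) : ℕ := (supp v).card

/-- A nonzero codeword of `D` is a zero neighbor (minimal codeword) if no nonzero
codeword of `D` has support strictly contained in its support. -/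
def IsZeroNeighbor {n : ℕ} (D : Set (Fin n → ZMod 2)) (v : Fin n → ZMod 2) : Prop :=
  v ∈ D ∧ v ≠ 0 ∧ ∀ v' ∈ D, v' ≠ 0 → ¬ supp v' ⊂ supp v

/-- `v` is decomposable in `D` if it is the sum of two nonzero codewords of `D`
with disjoint supports. -/
def Decomposable {n : ℕ} (D : Set (Fin n → ZMod 2)) (v : Fin n → ZMod 2) : Prop :=
  ∃ v1 v2, v1 ∈ D ∧ v2 ∈ D ∧ v1 ≠ 0 ∧ v2 ≠ 0 ∧
    Disjoint (supp v1) (supp v2) ∧ v = v1 + v2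

/-- Extension of a vector by its overall parity bit. -/
def extVec {n : ℕ} (v : Fin n → ZMod 2) : Fin (n + 1) → ZMod 2 :=
  Fin.snoc v (∑ i, v i)

/-- The extended code. -/
def extCode {n : ℕ} (C : Submodule (ZMod 2) (Fin n → ZMod 2)) :
    Set (Fin (n + 1) → ZMod 2) :=
  extVec '' (C : Set (Fin n → ZMod 2))

/-- An even-weight codeword is only-odd-decomposable if it is decomposable and in every
decomposition into nonzero disjoint-support codewords both parts have odd weight. -/
def OnlyOddDecomposable {n : ℕ} (C : Submodule (ZMod 2) (Fin n → ZMod 2))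
    (v : Fin n → ZMod 2) : Prop :=
  Even (wt v) ∧ Decomposable (C : Set (Fin n → ZMod 2)) v ∧
    ∀ v1 v2, v1 ∈ C → v2 ∈ C → v1 ≠ 0 → v2 ≠ 0 →
      Disjoint (supp v1) (supp v2) → v = v1 + v2 → Odd (wt v1) ∧ Odd (wt v2)

/-- `L_w(D)`: the number of zero neighbors of weight `w` in `D`. -/
noncomputable def Lw {n : ℕ} (D : Set (Fin n → ZMod 2)) (w : ℕ) : ℕ :=
  {v : Fin n → ZMod 2 | IsZeroNeighbor D v ∧ wt v = w}.ncard

/-- `N_w(C)`: the number of only-odd-decomposable codewords of weight `w` in `C`. -/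
noncomputable def Nw {n : ℕ} (C : Submodule (ZMod 2) (Fin n → ZMod 2)) (w : ℕ) : ℕ :=
  {v : Fin n → ZMod 2 | v ∈ C ∧ OnlyOddDecomposable C v ∧ wt v = w}.ncard

/-- Action of a coordinate permutation on a vector. -/
def permVec {n : ℕ} (π : Equiv.Perm (Fin n)) (v : Fin n → ZMod 2) : Fin n → ZMod 2 :=
  v ∘ π.symm

/-- `π` is an automorphism of the code `D`. -/
def IsAut {n : ℕ} (D : Set (Fin n → ZMod 2)) (π : Equiv.Perm (Fin n)) : Prop :=
  permVec π '' D = D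

/-- The even weight subcode of `C`, as a set. -/
def evenSub {n : ℕ} (C : Submodule (ZMod 2) (Fin n → ZMod 2)) :
    Set (Fin n → ZMod 2) :=
  {v : Fin n → ZMod 2 | v ∈ C ∧ Even (wt v)}


section Aux

lemma mem_supp {n : ℕ} {v : Fin n → ZMod 2} {i : Fin n} : i ∈ supp v ↔ v i ≠ 0 := by
  simp [supp]

lemma zmod2_ne_zero : ∀ a : ZMod 2, a ≠ 0 → a = 1 := by decide

lemma zmod2_add_cancel : ∀ a b : ZMod 2, a + (b + a) = b := by decide

lemma zmod2_add_ne : ∀ a b : ZMod 2, (b ≠ 0 → a ≠ 0) → (a + b ≠ 0 ↔ a ≠ 0 ∧ b = 0) := by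
  decide

lemma supp_nonempty_iff {n : ℕ} {v : Fin n → ZMod 2} : (supp v).Nonempty ↔ v ≠ 0 := by
  simp only [supp, Finset.filter_nonempty_iff, Finset.mem_univ, true_and]
  constructor
  · rintro ⟨i, hi⟩ rfl; exact hi rfl
  · intro h
    by_contra hc
    push_neg at hc
    exact h (funext fun i => hc i)

lemma sum_eq_wt {n : ℕ} (v : Fin n → ZMod 2) : ∑ i, v i = (wt v : ZMod 2) := by
  have h1 : ∑ i, v i = ∑ i ∈ supp v, v i := (Finset.sum_filter_ne_zero _).symm
  rw [h1, Finset.sum_congr rfl (fun i hi => zmod2_ne_zero _ (mem_supp.mp hi)),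
    Finset.sum_const, wt]
  simp

lemma even_cast_zmod2 {k : ℕ} (h : Even k) : (k : ZMod 2) = 0 := by
  obtain ⟨m, rfl⟩ := h
  push_cast
  exact CharTwo.add_self_eq_zero _

lemma odd_cast_zmod2 {k : ℕ} (h : Odd k) : (k : ZMod 2) = 1 := by
  rw [← ZMod.natCast_mod, Nat.odd_iff.mp h, Nat.cast_one]

lemma supp_extVec_even {n : ℕ} {v : Fin n → ZMod 2} (h : Even (wt v)) :
    supp (extVec v) = (supp v).map ⟨Fin.castSucc, Fin.castSucc_injective n⟩ := by
  ext i
  induction i using Fin.lastCases with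
  | last =>
    simp only [mem_supp, extVec, Fin.snoc_last, Finset.mem_map, Function.Embedding.coeFn_mk]
    rw [sum_eq_wt, even_cast_zmod2 h]
    simp only [ne_eq, not_true_eq_false, false_iff]
    rintro ⟨j, _, hj⟩
    exact absurd hj (Fin.castSucc_lt_last j).ne
  | cast j =>
    simp only [mem_supp, extVec, Fin.snoc_castSucc, Finset.mem_map,
      Function.Embedding.coeFn_mk]
    constructor
    · intro h'; exact ⟨j, h', rfl⟩
    · rintro ⟨k, hk, hkj⟩
      have : k = j := Fin.castSucc_injective n hkj
      subst this
      exact hk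

lemma extVec_ne_zero {n : ℕ} {v : Fin n → ZMod 2} (h : v ≠ 0) : extVec v ≠ 0 := by
  obtain ⟨i, hi⟩ := supp_nonempty_iff.mpr h
  intro hc
  have : extVec v i.castSucc = 0 := by rw [hc]; rfl
  rw [extVec, Fin.snoc_castSucc] at this
  exact mem_supp.mp hi this

lemma extVec_zero {n : ℕ} : extVec (0 : Fin n → ZMod 2) = 0 := by
  funext i
  induction i using Fin.lastCases with
  | last => simp [extVec]
  | cast j => simp [extVec]

lemma supp_add_disjoint {n : ℕ} {v1 v2 : Fin n → ZMod 2}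
    (h : Disjoint (supp v1) (supp v2)) : supp (v1 + v2) = supp v1 ∪ supp v2 := by
  ext i
  simp only [mem_supp, Finset.mem_union, Pi.add_apply]
  have hd : ¬(v1 i ≠ 0 ∧ v2 i ≠ 0) := by
    rintro ⟨h1, h2⟩
    exact (Finset.disjoint_left.mp h (mem_supp.mpr h1)) (mem_supp.mpr h2)
  rcases eq_or_ne (v1 i) 0 with h1 | h1
  · simp [h1]
  · have h2 : v2 i = 0 := by
      by_contra h2; exact hd ⟨h1, h2⟩
    simp [h1, h2]

end Aux

theorem even_decomposable_extend_zero_neighbor_iff {n : ℕ}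
    (C : Submodule (ZMod 2) (Fin n → ZMod 2)) (v : Fin n → ZMod 2)
    (hv : v ∈ C) (heven : Even (wt v))
    (hdec : Decomposable (C : Set (Fin n → ZMod 2)) v) :
    IsZeroNeighbor (extCode C) (extVec v) ↔
      (∀ v1 v2, v1 ∈ C → v2 ∈ C → v1 ≠ 0 → v2 ≠ 0 →
        Disjoint (supp v1) (supp v2) → v = v1 + v2 →
          Odd (wt v1) ∧ Odd (wt v2)) := by
  obtain ⟨w1, w2, hw1, hw2, hwn1, hwn2, hwdisj, hweq⟩ := hdec
  constructor
  · intro hzn v1 v2 h1 h2 hn1 hn2 hdisj heq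
    have hsupp : supp v = supp v1 ∪ supp v2 := by rw [heq, supp_add_disjoint hdisj]
    have hwt : wt v = wt v1 + wt v2 := by
      rw [wt, hsupp, Finset.card_union_of_disjoint hdisj]; rfl
    suffices hodd1 : Odd (wt v1) by
      refine ⟨hodd1, ?_⟩
      have := (Nat.even_add).mp (hwt ▸ heven)
      rw [← Nat.not_even_iff_odd] at hodd1 ⊢
      intro h; exact hodd1 (this.mpr h)
    by_contra hne
    have he1 : Even (wt v1) := Nat.not_odd_iff_even.mp hne
    refine hzn.2.2 (extVec v1) ⟨v1, h1, rfl⟩ (extVec_ne_zero hn1) ?_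
    rw [supp_extVec_even he1, supp_extVec_even heven]
    rw [Finset.map_ssubset_map]
    rw [hsupp]
    obtain ⟨i, hi⟩ := supp_nonempty_iff.mpr hn2
    refine ⟨Finset.subset_union_left, fun hsub => ?_⟩
    exact Finset.disjoint_left.mp hdisj (hsub (Finset.mem_union_right _ hi)) hi
  · intro hall
    have hvne : v ≠ 0 := by
      rw [← supp_nonempty_iff, hweq, supp_add_disjoint hwdisj]
      obtain ⟨i, hi⟩ := supp_nonempty_iff.mpr hwn1
      exact ⟨i, Finset.mem_union_left _ hi⟩
    refine ⟨⟨v, hv, rfl⟩, extVec_ne_zero hvne, ?_⟩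
    rintro w ⟨w', hw', rfl⟩ hwne hss
    have hw'ne : w' ≠ 0 := by rintro rfl; exact hwne extVec_zero
    have hwe : Even (wt w') := by
      by_contra h
      have hodd : Odd (wt w') := Nat.not_even_iff_odd.mp (by simpa using h)
      have hlast : Fin.last n ∈ supp (extVec w') := by
        rw [mem_supp, extVec, Fin.snoc_last, sum_eq_wt, odd_cast_zmod2 hodd]
        exact one_ne_zero
      have := hss.subset hlast
      rw [mem_supp, extVec, Fin.snoc_last, sum_eq_wt, even_cast_zmod2 heven] at this
      exact this rfl
    rw [supp_extVec_even hwe, supp_extVec_even heven, Finset.map_ssubset_map] at hss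
    set u := v + w' with hu
    have hveq : v = w' + u := by
      funext i
      simp only [hu, Pi.add_apply]
      exact (zmod2_add_cancel (w' i) (v i)).symm
    have hu_supp : supp u = supp v \ supp w' := by
      ext i
      simp only [mem_supp, Finset.mem_sdiff, hu, Pi.add_apply]
      have hsub : w' i ≠ 0 → v i ≠ 0 := fun h => mem_supp.mp (hss.subset (mem_supp.mpr h))
      rw [zmod2_add_ne _ _ hsub]
      tauto
    have hu_ne : u ≠ 0 := by
      rw [← supp_nonempty_iff, hu_supp]
      obtain ⟨i, hiv, hiw⟩ := Finset.exists_of_ssubset hss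
      exact ⟨i, Finset.mem_sdiff.mpr ⟨hiv, hiw⟩⟩
    have hdisj' : Disjoint (supp w') (supp u) := by
      rw [hu_supp]
      exact Finset.disjoint_sdiff
    obtain ⟨ho1, _⟩ := hall w' u hw' (C.add_mem hv hw') hw'ne hu_ne hdisj' hveq
    exact (Nat.not_even_iff_odd.mpr ho1) hwe
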